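/- Let e_1,...,e_r be integers with e_i ≥ 2, let (λ_i), (μ_i), n be the associated data, and let M be the r×r matrix with M_{ii} = −e_i, M_{i,i+1} = M_{i+1,i} = 1, and 0 elsewhere. Fix 1 ≤ i ≤ r, and let v ∈ ℚ^r be the vector with v_k = (λ_i/n)·μ_k for k ≤ i and v_k = (μ_i/n)·λ_k for k > i. Then (Mv)_i = −1 and (Mv)_j = 0 for all j ≠ i. In particular all entries of v are positive. -/

import Mathlib

/-- The divisor M_i(Θ) on a Hirzebruch–Jung string: with intersection matrix M
(M_{kk} = −e_k, M_{k,k+1} = M_{k+1,k} = 1, 0 elsewhere) and v_k = (λ_i/n)μ_k for k ≤ i,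
v_k = (μ_i/n)λ_k for k > i, one has (Mv)_i = −1, (Mv)_j = 0 for j ≠ i, and all v_k > 0. -/
theorem stmt8 (r : ℕ) (e lam mu : ℕ → ℤ)
    (he : ∀ i, 1 ≤ i → i ≤ r → 2 ≤ e i)
    (hmu0 : mu 0 = 0) (hmu1 : mu 1 = 1)
    (hmu : ∀ k, 1 ≤ k → k ≤ r → mu (k + 1) = e k * mu k - mu (k - 1))
    (hlamtop : lam (r + 1) = 0) (hlamr : lam r = 1)
    (hlam : ∀ k, 1 ≤ k → k ≤ r → lam (k - 1) = e k * lam k - lam (k + 1))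
    (hn : lam 0 = mu (r + 1))
    (M : Matrix (Fin r) (Fin r) ℚ)
    (hM : ∀ k j : Fin r, M k j =
      if k = j then -(e ((k : ℕ) + 1) : ℚ)
      else if (k : ℕ) + 1 = (j : ℕ) ∨ (j : ℕ) + 1 = (k : ℕ) then 1 else 0)
    (i : ℕ) (hi1 : 1 ≤ i) (hir : i ≤ r)
    (v : Fin r → ℚ)
    (hv : ∀ k : Fin r, v k =
      if (k : ℕ) + 1 ≤ i then (lam i : ℚ) / (mu (r + 1) : ℚ) * (mu ((k : ℕ) + 1) : ℚ)
      else (mu i : ℚ) / (mu (r + 1) : ℚ) * (lam ((k : ℕ) + 1) : ℚ)) :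
    (∀ j : Fin r, M.mulVec v j = if (j : ℕ) + 1 = i then -1 else 0) ∧
    (∀ k : Fin r, 0 < v k) := by
  -- μ is positive and strictly increasing
  have mu_aux : ∀ k, k ≤ r → 0 ≤ mu k ∧ mu k + 1 ≤ mu (k + 1) := by
    intro k
    induction k with
    | zero => intro _; norm_num [hmu0, hmu1]
    | succ m ih =>
      intro h
      obtain ⟨h1, h2⟩ := ih (by omega)
      have hrec := hmu (m + 1) (by omega) h
      have he' := he (m + 1) (by omega) h
      simp only [Nat.add_sub_cancel] at hrec
      have h3 : 2 * mu (m + 1) ≤ e (m + 1) * mu (m + 1) := by nlinarith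
      constructor <;> linarith
  have mu_pos : ∀ k, 1 ≤ k → k ≤ r + 1 → 1 ≤ mu k := by
    intro k hk1 hk2
    obtain ⟨m, rfl⟩ : ∃ m, k = m + 1 := ⟨k - 1, by omega⟩
    have := mu_aux m (by omega)
    omega
  -- λ is positive and strictly decreasing
  have lam_aux : ∀ d, d ≤ r → lam (r + 1 - d) + 1 ≤ lam (r - d) ∧ 0 ≤ lam (r + 1 - d) := by
    intro d
    induction d with
    | zero => intro _; simp [hlamtop, hlamr]
    | succ m ih =>
      intro h
      obtain ⟨h1, h2⟩ := ih (by omega)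
      set k := r - m with hk
      have e1 : r + 1 - m = k + 1 := by omega
      have e2 : r - (m + 1) = k - 1 := by omega
      have e3 : r + 1 - (m + 1) = k := by omega
      rw [e1] at h1 h2
      rw [e2, e3]
      have hrec := hlam k (by omega) (by omega)
      have he' := he k (by omega) (by omega)
      have h3 : 2 * lam k ≤ e k * lam k := by nlinarith
      constructor <;> linarith
  have lam_pos : ∀ k, k ≤ r → 1 ≤ lam k := by
    intro k hk
    have h := lam_aux (r - k) (by omega)
    have e1 : r - (r - k) = k := by omega
    have e2 : r + 1 - (r - k) = k + 1 := by omega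
    rw [e1, e2] at h
    omega
  -- the Wronskian identity
  have hW : ∀ k, k ≤ r → lam k * mu (k + 1) - lam (k + 1) * mu k = mu (r + 1) := by
    intro k
    induction k with
    | zero => intro _; rw [hmu0, hmu1]; linarith [hn]
    | succ m ih =>
      intro h
      have ihm := ih (by omega)
      have hrec := hmu (m + 1) (by omega) h
      have hrec2 := hlam (m + 1) (by omega) h
      simp only [Nat.add_sub_cancel] at hrec hrec2
      linear_combination ihm + lam (m + 1) * hrec - mu (m + 1) * hrec2
  have hn1 : (0 : ℤ) < mu (r + 1) := by have := mu_pos (r + 1) (by omega) le_rfl; omega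
  have hnQ : (0 : ℚ) < (mu (r + 1) : ℚ) := by exact_mod_cast hn1
  have hn0 : (mu (r + 1) : ℚ) ≠ 0 := ne_of_gt hnQ
  -- decompose a row of the matrix-vector product
  have hsum : ∀ j : Fin r, M.mulVec v j =
      -(e ((j : ℕ) + 1) : ℚ) * v j
      + (∑ k : Fin r, if (k : ℕ) + 1 = (j : ℕ) then v k else 0)
      + (∑ k : Fin r, if (j : ℕ) + 1 = (k : ℕ) then v k else 0) := by
    intro j
    have hterm : ∀ k : Fin r, M j k * v k =
        (if j = k then -(e ((j : ℕ) + 1) : ℚ) * v k else 0)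
        + (if (k : ℕ) + 1 = (j : ℕ) then v k else 0)
        + (if (j : ℕ) + 1 = (k : ℕ) then v k else 0) := by
      intro k
      rw [hM j k]
      by_cases h1 : j = k
      · subst h1
        have h2 : ¬((j : ℕ) + 1 = (j : ℕ)) := by omega
        simp [h2]
      · rw [if_neg h1, if_neg h1]
        by_cases h2 : (j : ℕ) + 1 = (k : ℕ)
        · have h3 : ¬((k : ℕ) + 1 = (j : ℕ)) := by omega
          rw [if_pos (Or.inl h2), if_pos h2, if_neg h3]; ring
        · by_cases h3 : (k : ℕ) + 1 = (j : ℕ)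
          · rw [if_pos (Or.inr h3), if_pos h3, if_neg h2]; ring
          · rw [if_neg (by tauto), if_neg h2, if_neg h3]; ring
    show (∑ k, M j k * v k) = _
    rw [Finset.sum_congr rfl (fun k _ => hterm k), Finset.sum_add_distrib,
      Finset.sum_add_distrib, Finset.sum_ite_eq]
    simp
  -- evaluate the left-neighbour spike sum
  have hA : ∀ j : Fin r, (∑ k : Fin r, if (k : ℕ) + 1 = (j : ℕ) then v k else 0)
      = if (j : ℕ) ≤ i then (lam i : ℚ) / (mu (r + 1) : ℚ) * (mu (j : ℕ) : ℚ)
        else (mu i : ℚ) / (mu (r + 1) : ℚ) * (lam (j : ℕ) : ℚ) := by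
    intro j
    by_cases hj : 1 ≤ (j : ℕ)
    · have hlt : (j : ℕ) - 1 < r := lt_of_le_of_lt (Nat.sub_le _ _) j.isLt
      rw [Finset.sum_eq_single_of_mem (⟨(j : ℕ) - 1, hlt⟩ : Fin r) (Finset.mem_univ _)
        (by
          intro b _ hb
          refine if_neg fun hcon => hb (Fin.ext ?_)
          show (b : ℕ) = (j : ℕ) - 1
          omega)]
      rw [if_pos (show ((⟨(j : ℕ) - 1, hlt⟩ : Fin r) : ℕ) + 1 = (j : ℕ) by
        show (j : ℕ) - 1 + 1 = (j : ℕ); omega)]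
      rw [hv ⟨(j : ℕ) - 1, hlt⟩]
      have he1 : ((⟨(j : ℕ) - 1, hlt⟩ : Fin r) : ℕ) + 1 = (j : ℕ) := by
        show (j : ℕ) - 1 + 1 = (j : ℕ); omega
      rw [he1]
    · have hj0 : (j : ℕ) = 0 := by omega
      rw [Finset.sum_eq_zero (fun k _ => if_neg (by omega))]
      rw [if_pos (by omega), hj0, hmu0]
      simp
  -- evaluate the right-neighbour spike sum
  have hB : ∀ j : Fin r, (∑ k : Fin r, if (j : ℕ) + 1 = (k : ℕ) then v k else 0)
      = if (j : ℕ) + 1 + 1 ≤ i then (lam i : ℚ) / (mu (r + 1) : ℚ) * (mu ((j : ℕ) + 1 + 1) : ℚ)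
        else (mu i : ℚ) / (mu (r + 1) : ℚ) * (lam ((j : ℕ) + 1 + 1) : ℚ) := by
    intro j
    by_cases hj : (j : ℕ) + 1 < r
    · rw [Finset.sum_eq_single_of_mem (⟨(j : ℕ) + 1, hj⟩ : Fin r) (Finset.mem_univ _)
        (by
          intro b _ hb
          refine if_neg fun hcon => hb (Fin.ext ?_)
          show (b : ℕ) = (j : ℕ) + 1
          omega)]
      rw [if_pos (show (j : ℕ) + 1 = ((⟨(j : ℕ) + 1, hj⟩ : Fin r) : ℕ) from rfl)]
      rw [hv ⟨(j : ℕ) + 1, hj⟩]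
    · have hjr : (j : ℕ) + 1 = r := by have := j.isLt; omega
      rw [Finset.sum_eq_zero (fun k _ => if_neg (by have := k.isLt; omega))]
      rw [if_neg (by omega), hjr, hlamtop]
      simp
  constructor
  · -- the matrix-vector product values
    intro j
    have hjr := j.isLt
    rw [hsum j, hA j, hB j, hv j]
    rcases lt_trichotomy ((j : ℕ) + 1) i with hc | hc | hc
    · -- p < i
      rw [if_neg (show ¬((j : ℕ) + 1 = i) by omega),
        if_pos (show (j : ℕ) + 1 ≤ i by omega),
        if_pos (show (j : ℕ) ≤ i by omega),
        if_pos (show (j : ℕ) + 1 + 1 ≤ i by omega)]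
      have hrec := hmu ((j : ℕ) + 1) (by omega) (by omega)
      simp only [Nat.add_sub_cancel] at hrec
      have hq : (mu ((j : ℕ) + 1 + 1) : ℚ)
          = (e ((j : ℕ) + 1) : ℚ) * (mu ((j : ℕ) + 1) : ℚ) - (mu (j : ℕ) : ℚ) := by
        exact_mod_cast hrec
      linear_combination ((lam i : ℚ) / (mu (r + 1) : ℚ)) * hq
    · -- p = i
      subst hc
      rw [if_pos (show (j : ℕ) + 1 = (j : ℕ) + 1 from rfl),
        if_pos (show (j : ℕ) + 1 ≤ (j : ℕ) + 1 from le_rfl),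
        if_pos (show (j : ℕ) ≤ (j : ℕ) + 1 by omega),
        if_neg (show ¬((j : ℕ) + 1 + 1 ≤ (j : ℕ) + 1) by omega)]
      have hrec := hmu ((j : ℕ) + 1) (by omega) (by omega)
      simp only [Nat.add_sub_cancel] at hrec
      have hq : (mu ((j : ℕ) + 1 + 1) : ℚ)
          = (e ((j : ℕ) + 1) : ℚ) * (mu ((j : ℕ) + 1) : ℚ) - (mu (j : ℕ) : ℚ) := by
        exact_mod_cast hrec
      have hWq : (lam ((j : ℕ) + 1) : ℚ) * (mu ((j : ℕ) + 1 + 1) : ℚ)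
          - (lam ((j : ℕ) + 1 + 1) : ℚ) * (mu ((j : ℕ) + 1) : ℚ) = (mu (r + 1) : ℚ) := by
        exact_mod_cast hW ((j : ℕ) + 1) (by omega)
      field_simp
      linear_combination ((lam ((j : ℕ) + 1) : ℚ) * hq - hWq)
    · -- p > i
      rw [if_neg (show ¬((j : ℕ) + 1 = i) by omega),
        if_neg (show ¬((j : ℕ) + 1 ≤ i) by omega),
        if_neg (show ¬((j : ℕ) + 1 + 1 ≤ i) by omega)]
      have hArw : (if (j : ℕ) ≤ i then (lam i : ℚ) / (mu (r + 1) : ℚ) * (mu (j : ℕ) : ℚ)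
          else (mu i : ℚ) / (mu (r + 1) : ℚ) * (lam (j : ℕ) : ℚ))
          = (mu i : ℚ) / (mu (r + 1) : ℚ) * (lam (j : ℕ) : ℚ) := by
        split_ifs with h
        · have hji : (j : ℕ) = i := by omega
          rw [hji]; ring
        · rfl
      rw [hArw]
      have hrec := hlam ((j : ℕ) + 1) (by omega) (by omega)
      simp only [Nat.add_sub_cancel] at hrec
      have hq : (lam (j : ℕ) : ℚ)
          = (e ((j : ℕ) + 1) : ℚ) * (lam ((j : ℕ) + 1) : ℚ) - (lam ((j : ℕ) + 1 + 1) : ℚ) := by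
        exact_mod_cast hrec
      linear_combination ((mu i : ℚ) / (mu (r + 1) : ℚ)) * hq
  · -- positivity
    intro k
    have hk := k.isLt
    rw [hv k]
    split_ifs with h
    · have h1 : (0 : ℚ) < (lam i : ℚ) := by
        have := lam_pos i hir; exact_mod_cast (by omega : (0 : ℤ) < lam i)
      have h2 : (0 : ℚ) < (mu ((k : ℕ) + 1) : ℚ) := by
        have := mu_pos ((k : ℕ) + 1) (by omega) (by omega)
        exact_mod_cast (by omega : (0 : ℤ) < mu ((k : ℕ) + 1))
      exact mul_pos (div_pos h1 hnQ) h2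
    · have h1 : (0 : ℚ) < (mu i : ℚ) := by
        have := mu_pos i (by omega) (by omega)
        exact_mod_cast (by omega : (0 : ℤ) < mu i)
      have h2 : (0 : ℚ) < (lam ((k : ℕ) + 1) : ℚ) := by
        have := lam_pos ((k : ℕ) + 1) (by omega)
        exact_mod_cast (by omega : (0 : ℤ) < lam ((k : ℕ) + 1))
      exact mul_pos (div_pos h1 hnQ) h2
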